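/- In ℤ[x], every polynomial of degree n ≥ 1 can be expressed as the sum of two irreducible polynomials, each of degree n. -/
import Mathlib

open Polynomial

private lemma coeff_range_sum (b : ℕ → ℤ) (n j : ℕ) :
    (∑ i ∈ Finset.range (n + 1), C (b i) * X ^ i).coeff j
      = if j ≤ n then b j else 0 := by
  rw [finset_sum_coeff]
  simp only [coeff_C_mul, coeff_X_pow, mul_ite, mul_one, mul_zero]
  rw [Finset.sum_ite_eq (Finset.range (n + 1)) j b]
  simp [Nat.lt_succ_iff]

theorem hayes_polynomial_goldbach (f : Polynomial ℤ) (hf : 1 ≤ f.natDegree) :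
    ∃ g h : Polynomial ℤ, Irreducible g ∧ Irreducible h ∧ f = g + h ∧
      g.natDegree = f.natDegree ∧ h.natDegree = f.natDegree := by
  set n := f.natDegree with hn
  -- choose ε ∈ {1, -1} with leading coeff minus ε nonzero
  set ε : ℤ := if f.coeff n = 1 then -1 else 1 with hεdef
  have hεunit : IsUnit ε := by
    rcases ite_eq_or_eq (f.coeff n = 1) (-1 : ℤ) 1 with h | h <;>
      rw [hεdef, h] <;> simp
  have hε1 : ε = 1 ∨ ε = -1 := by
    rcases ite_eq_or_eq (f.coeff n = 1) (-1 : ℤ) 1 with h | h <;>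
      rw [hεdef, h] <;> simp
  set m : ℤ := f.coeff n - ε with hmdef
  have hm : m ≠ 0 := by
    rw [hmdef, hεdef]
    split_ifs with h
    · rw [h]; norm_num
    · intro hc
      apply h
      linarith [sub_eq_zero.mp hc]
  -- choose primes p < q larger than |m|
  obtain ⟨p, hple, hp⟩ := Nat.exists_infinite_primes (m.natAbs + 2)
  obtain ⟨q, hqle, hq⟩ := Nat.exists_infinite_primes (p + 1)
  set P : ℤ := (p : ℤ) with hPdef
  set Q : ℤ := (q : ℤ) with hQdef
  have hPprime : Prime P := Nat.prime_iff_prime_int.mp hp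
  have hQprime : Prime Q := Nat.prime_iff_prime_int.mp hq
  have hmabs : m.natAbs ≠ 0 := Int.natAbs_ne_zero.mpr hm
  have hPm : ¬ P ∣ m := by
    intro hd
    have : p ∣ m.natAbs := Int.natAbs_dvd_natAbs.mpr (by simpa using hd)
    have := Nat.le_of_dvd (Nat.pos_of_ne_zero hmabs) this
    omega
  have hQm : ¬ Q ∣ m := by
    intro hd
    have : q ∣ m.natAbs := Int.natAbs_dvd_natAbs.mpr (by simpa using hd)
    have := Nat.le_of_dvd (Nat.pos_of_ne_zero hmabs) this
    omega
  have hPQne : p ≠ q := by omega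
  have hQP : ¬ Q ∣ P := by
    intro hd
    have : q ∣ p := Int.natCast_dvd_natCast.mp (by simpa using hd)
    have := (Nat.prime_dvd_prime_iff_eq hq hp).mp this
    omega
  have hPQ : ¬ P ∣ Q := by
    intro hd
    have : p ∣ q := Int.natCast_dvd_natCast.mp (by simpa using hd)
    have := (Nat.prime_dvd_prime_iff_eq hp hq).mp this
    omega
  -- Bezout data
  have c1 : IsCoprime (P * m) Q := by
    have : ¬ Q ∣ P * m := by
      intro hd
      rcases hQprime.dvd_mul.mp hd with h | h
      · exact hQP h
      · exact hQm h
    exact (hQprime.coprime_iff_not_dvd.mpr this).symm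
  obtain ⟨v, c, hvc⟩ := c1
  have c2 : IsCoprime (Q * Q * m) (P ^ 2) := by
    have hnd : ¬ P ∣ Q * Q * m := by
      intro hd
      rcases hPprime.dvd_mul.mp hd with h | h
      · rcases hPprime.dvd_mul.mp h with h' | h' <;> exact hPQ h'
      · exact hPm h
    exact ((hPprime.coprime_iff_not_dvd.mpr hnd).symm).pow_right
  obtain ⟨x, y, hxy⟩ := c2
  -- constants
  set s : ℤ := x * (f.coeff 0 - P - Q) with hsdef
  set w : ℤ := 1 + Q * m * s with hwdef
  set b0 : ℤ := f.coeff 0 - Q * w with hb0def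
  have hb0 : b0 = P + P ^ 2 * (y * (f.coeff 0 - P - Q)) := by
    rw [hb0def, hwdef, hsdef]
    linear_combination (P + Q - f.coeff 0) * hxy
  -- the polynomial g
  set b : ℕ → ℤ := fun i =>
    if i = 0 then b0 else if i = n then ε else f.coeff i * (P * m * v) with hbdef
  set g : Polynomial ℤ := ∑ i ∈ Finset.range (n + 1), C (b i) * X ^ i with hgdef
  have hgcoeff : ∀ j, g.coeff j = if j ≤ n then b j else 0 := fun j =>
    coeff_range_sum b n j
  have hn0 : n ≠ 0 := by omega
  have hgn : g.coeff n = ε := by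
    rw [hgcoeff n, if_pos le_rfl, hbdef]
    simp [hn0]
  have hg0 : g.coeff 0 = b0 := by
    rw [hgcoeff 0, if_pos (Nat.zero_le n), hbdef]
    simp
  have hgmid : ∀ j, 0 < j → j < n → g.coeff j = f.coeff j * (P * m * v) := by
    intro j hj1 hj2
    rw [hgcoeff j, if_pos hj2.le, hbdef]
    simp [Nat.pos_iff_ne_zero.mp hj1, Nat.ne_of_lt hj2]
  have hgtop : ∀ j, n < j → g.coeff j = 0 := by
    intro j hj
    rw [hgcoeff j, if_neg (by omega)]
  have hε0 : ε ≠ 0 := hεunit.ne_zero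
  have hgdeg : g.natDegree = n := by
    apply le_antisymm
    · exact natDegree_le_iff_coeff_eq_zero.mpr fun N hN => hgtop N hN
    · exact le_natDegree_of_ne_zero (by rw [hgn]; exact hε0)
  -- h
  set h : Polynomial ℤ := f - g with hhdef
  have hfg : ∀ j, h.coeff j = f.coeff j - g.coeff j := by
    intro j; rw [hhdef, coeff_sub]
  have hhn : h.coeff n = m := by rw [hfg, hgn, hmdef]
  have hh0 : h.coeff 0 = Q * w := by rw [hfg, hg0, hb0def]; ring
  have hhmid : ∀ j, 0 < j → j < n → h.coeff j = f.coeff j * (c * Q) := by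
    intro j hj1 hj2
    rw [hfg, hgmid j hj1 hj2]
    linear_combination -(f.coeff j) * hvc
  have hhtop : ∀ j, n < j → h.coeff j = 0 := by
    intro j hj
    rw [hfg, hgtop j hj, coeff_eq_zero_of_natDegree_lt (by omega), sub_zero]
  have hhdeg : h.natDegree = n := by
    apply le_antisymm
    · exact natDegree_le_iff_coeff_eq_zero.mpr fun N hN => hhtop N hN
    · exact le_natDegree_of_ne_zero (by rw [hhn]; exact hm)
  have hP0 : P ≠ 0 := hPprime.ne_zero
  have hQ0 : Q ≠ 0 := hQprime.ne_zero
  -- primitivity of g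
  have hgprim : g.IsPrimitive := by
    intro r hr
    have hrn : r ∣ g.coeff n := (C_dvd_iff_dvd_coeff r g).mp hr n
    rw [hgn] at hrn
    exact isUnit_of_dvd_unit hrn hεunit
  -- primitivity of h
  have hQmcop : IsCoprime m Q := (hQprime.coprime_iff_not_dvd.mpr hQm).symm
  have hhprim : h.IsPrimitive := by
    intro r hr
    have hrn : r ∣ m := by have := (C_dvd_iff_dvd_coeff r h).mp hr n; rwa [hhn] at this
    have hr0 : r ∣ Q * w := by
      have := (C_dvd_iff_dvd_coeff r h).mp hr 0; rwa [hh0] at this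
    have hrQ : IsCoprime r Q := hQmcop.of_isCoprime_of_dvd_left hrn
    have hrw : r ∣ w := hrQ.dvd_of_dvd_mul_left hr0
    have hrw1 : r ∣ w - 1 := by
      rw [hwdef]
      simpa using (hrn.mul_left Q).mul_right s
    have hr1 : r ∣ 1 := by
      have h2 := dvd_sub hrw hrw1
      simpa using h2
    exact isUnit_of_dvd_one hr1
  -- Eisenstein for g at P
  have hPsq : ¬ (P ^ 2 ∣ P) := by
    intro hd
    have : P * P ∣ P * 1 := by rw [mul_one]; rwa [pow_two] at hd
    exact hPprime.not_dvd_one ((mul_dvd_mul_iff_left hP0).mp this)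
  have hgeis : g.IsEisensteinAt (Ideal.span {P}) := by
    constructor
    · rw [leadingCoeff, hgdeg, hgn, Ideal.mem_span_singleton]
      intro hd
      exact hPprime.not_dvd_one (hd.trans hεunit.dvd)
    · intro j hj
      rw [hgdeg] at hj
      rw [Ideal.mem_span_singleton]
      rcases Nat.eq_zero_or_pos j with h0 | h0
      · rw [h0, hg0, hb0]
        exact ⟨1 + P * (y * (f.coeff 0 - P - Q)), by ring⟩
      · rw [hgmid j h0 hj]
        exact ⟨f.coeff j * (m * v), by ring⟩
    · rw [hg0, Ideal.span_singleton_pow, Ideal.mem_span_singleton]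
      intro hd
      apply hPsq
      have : P ^ 2 ∣ b0 - P ^ 2 * (y * (f.coeff 0 - P - Q)) :=
        (dvd_sub_right hd).mpr (Dvd.intro _ rfl)
      rwa [hb0, add_sub_cancel_right] at this
  -- Eisenstein for h at Q
  have hQsq : ¬ (Q ^ 2 ∣ Q * w) := by
    intro hd
    have : Q * Q ∣ Q * w := by rwa [pow_two] at hd
    have hQw : Q ∣ w := (mul_dvd_mul_iff_left hQ0).mp this
    have : Q ∣ w - Q * (m * s) := (dvd_sub_right hQw).mpr (Dvd.intro _ rfl)
    rw [hwdef] at this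
    simp only [add_sub_cancel_right, mul_assoc] at this
    exact hQprime.not_dvd_one (by simpa using this)
  have hheis : h.IsEisensteinAt (Ideal.span {Q}) := by
    constructor
    · rw [leadingCoeff, hhdeg, hhn, Ideal.mem_span_singleton]
      exact hQm
    · intro j hj
      rw [hhdeg] at hj
      rw [Ideal.mem_span_singleton]
      rcases Nat.eq_zero_or_pos j with h0 | h0
      · rw [h0, hh0]; exact Dvd.intro _ rfl
      · rw [hhmid j h0 hj]
        exact ⟨f.coeff j * c, by ring⟩
    · rw [hh0, Ideal.span_singleton_pow, Ideal.mem_span_singleton]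
      exact hQsq
  have hPspan : (Ideal.span {P} : Ideal ℤ).IsPrime :=
    (Ideal.span_singleton_prime hP0).mpr hPprime
  have hQspan : (Ideal.span {Q} : Ideal ℤ).IsPrime :=
    (Ideal.span_singleton_prime hQ0).mpr hQprime
  have hgirr : Irreducible g := hgeis.irreducible hPspan hgprim (by omega)
  have hhirr : Irreducible h := hheis.irreducible hQspan hhprim (by omega)
  exact ⟨g, h, hgirr, hhirr, by rw [hhdef]; ring, hgdeg, hhdeg⟩
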